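/- arXiv:1804.09892 — 3 statements merged into one kernel-verified Lean document; each statement's English description precedes it below -/
import Mathlib

section
/- Let r and s be natural numbers (with r, s ≥ 1) and set α = (r-1)(s-1)/(rs). There exists an effectively computable constant C > 0, depending only on r and s (for instance C = 2^{rs}·rs works), such that for every sufficiently large natural number n, the interval [n, n + C·n^α] contains a natural number m which can be written as m = A^r + B^s with A and B non-negative integers. -/
private lemma pow_le_pow_add_one (x : ℝ) (hx : 0 ≤ x) {j k : ℕ} (hjk : j ≤ k) :
    x ^ j ≤ x ^ k + 1 := by
  rcases le_or_gt x 1 with h1 | h1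
  · have : x ^ j ≤ 1 := pow_le_one₀ hx h1
    have : (0:ℝ) ≤ x ^ k := pow_nonneg hx _
    linarith
  · have : x ^ j ≤ x ^ k := pow_le_pow_right₀ h1.le hjk
    linarith

private lemma succ_pow_le (k : ℕ) (hk : 1 ≤ k) :
    ∀ x : ℝ, 0 ≤ x → (x + 1) ^ k ≤ x ^ k + 5 ^ k * (x ^ (k - 1) + 1) := by
  induction k with
  | zero => omega
  | succ k ih =>
    rcases Nat.eq_or_lt_of_le hk with h1 | h1
    · intro x hx
      have hk0 : k = 0 := by omega
      subst hk0
      norm_num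
    · have hk1 : 1 ≤ k := by omega
      intro x hx
      have ihx := ih hk1 x hx
      have e1 : x ^ (k - 1) ≤ x ^ k + 1 := pow_le_pow_add_one x hx (by omega)
      have e2 : x ≤ x ^ k + 1 := by
        have := pow_le_pow_add_one x hx (j := 1) (k := k) hk1
        simpa using this
      have h5 : (0:ℝ) < 5 ^ k := by positivity
      have hxk : (0:ℝ) ≤ x ^ k := pow_nonneg hx _
      have step : (x + 1) ^ (k + 1) ≤ (x ^ k + 5 ^ k * (x ^ (k - 1) + 1)) * (x + 1) := by
        calc (x + 1) ^ (k + 1) = (x + 1) ^ k * (x + 1) := by ring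
        _ ≤ (x ^ k + 5 ^ k * (x ^ (k - 1) + 1)) * (x + 1) := by
            apply mul_le_mul_of_nonneg_right ihx (by linarith)
      have expand : (x ^ k + 5 ^ k * (x ^ (k - 1) + 1)) * (x + 1)
          = x ^ (k+1) + x ^ k + 5 ^ k * (x ^ (k-1) * x + x ^ (k-1) + x + 1) := by
        ring
      have e3 : x ^ (k - 1) * x = x ^ k := by
        rw [← pow_succ]
        congr 1
        omega
      have final : x ^ (k+1) + x ^ k + 5 ^ k * (x ^ (k-1) * x + x ^ (k-1) + x + 1)
          ≤ x ^ (k+1) + 5 ^ (k+1) * (x ^ k + 1) := by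
        rw [e3]
        have h51 : (1:ℝ) ≤ 5 ^ k := one_le_pow₀ (by norm_num)
        have ha : 5 ^ k * x ^ (k-1) ≤ 5 ^ k * (x ^ k + 1) :=
          mul_le_mul_of_nonneg_left e1 h5.le
        have hb : 5 ^ k * x ≤ 5 ^ k * (x ^ k + 1) :=
          mul_le_mul_of_nonneg_left e2 h5.le
        have hc : x ^ k ≤ 5 ^ k * x ^ k := by nlinarith
        have h5e : (5:ℝ) ^ (k+1) = 5 * 5 ^ k := by ring
        nlinarith [ha, hb, hc, h5, hxk]
      have : (k + 1) - 1 = k := by omega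
      rw [this]
      linarith

private lemma rpow_inv_pow (x : ℝ) (hx : 0 ≤ x) (k : ℕ) (hk : 1 ≤ k) :
    (x ^ ((k:ℝ)⁻¹)) ^ k = x := by
  have hk0 : (k:ℝ) ≠ 0 := Nat.cast_ne_zero.mpr (by omega)
  rw [← Real.rpow_natCast (x ^ ((k:ℝ)⁻¹)) k, ← Real.rpow_mul hx,
    inv_mul_cancel₀ hk0, Real.rpow_one]

private lemma rpow_inv_pow_pred (x : ℝ) (hx : 0 ≤ x) (k : ℕ) (hk : 1 ≤ k) :
    (x ^ ((k:ℝ)⁻¹)) ^ (k - 1) = x ^ (((k:ℝ) - 1) / k) := by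
  have hk0 : (k:ℝ) ≠ 0 := Nat.cast_ne_zero.mpr (by omega)
  rw [← Real.rpow_natCast (x ^ ((k:ℝ)⁻¹)) (k - 1), ← Real.rpow_mul hx]
  congr 1
  have : ((k - 1 : ℕ) : ℝ) = (k:ℝ) - 1 := by
    push_cast [Nat.cast_sub hk]; ring
  rw [this]
  field_simp

/-- **Theorem (Bambah–Chowla type).**
Let `r` and `s` be natural numbers (with `r, s ≥ 1`) and set
`α = (r-1)(s-1)/(rs)`. There exists a constant `C > 0`, depending only on
`r` and `s`, such that for every sufficiently large natural number `n`, the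
real interval `[n, n + C·n^α]` contains a natural number `m` which can be
written as `m = A^r + B^s` with `A`, `B` non-negative integers. -/
theorem sum_of_rth_and_sth_powers_in_short_intervals
    (r s : ℕ) (hr : 1 ≤ r) (hs : 1 ≤ s) :
    ∃ C : ℝ, 0 < C ∧ ∃ n₀ : ℕ, ∀ n : ℕ, n₀ ≤ n →
      ∃ m A B : ℕ, m = A ^ r + B ^ s ∧
        (n : ℝ) ≤ (m : ℝ) ∧
        (m : ℝ) ≤ (n : ℝ) + C * (n : ℝ) ^
          ((((r : ℝ) - 1) * ((s : ℝ) - 1)) / ((r : ℝ) * (s : ℝ))) := by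
  have hr0 : (r:ℝ) ≠ 0 := Nat.cast_ne_zero.mpr (by omega)
  have hs0 : (s:ℝ) ≠ 0 := Nat.cast_ne_zero.mpr (by omega)
  set α : ℝ := (((r : ℝ) - 1) * ((s : ℝ) - 1)) / ((r : ℝ) * (s : ℝ)) with hα
  have hα0 : 0 ≤ α := by
    apply div_nonneg
    · apply mul_nonneg <;>
      · simp only [sub_nonneg]
        exact_mod_cast ‹_›
    · positivity
  refine ⟨5 ^ s * (2 * 5 ^ r + 1), by positivity, 1, fun n hn => ?_⟩
  have hn1 : (1:ℝ) ≤ (n:ℝ) := by exact_mod_cast hn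
  have hn0 : (0:ℝ) ≤ (n:ℝ) := by linarith
  -- A = ⌊ n^(1/r) ⌋
  set A : ℕ := ⌊(n:ℝ) ^ ((r:ℝ)⁻¹)⌋₊ with hA
  have hroot : ((n:ℝ) ^ ((r:ℝ)⁻¹)) ^ r = n := rpow_inv_pow _ hn0 r hr
  have hAle : (A:ℝ) ≤ (n:ℝ) ^ ((r:ℝ)⁻¹) := Nat.floor_le (Real.rpow_nonneg hn0 _)
  have hArn : (A:ℝ) ^ r ≤ (n:ℝ) := by
    calc (A:ℝ) ^ r ≤ ((n:ℝ) ^ ((r:ℝ)⁻¹)) ^ r := pow_le_pow_left₀ (A.cast_nonneg) hAle r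
    _ = n := hroot
  have hArnN : A ^ r ≤ n := by exact_mod_cast hArn
  have hltA : (n:ℝ) < ((A:ℝ) + 1) ^ r := by
    have := Nat.lt_floor_add_one ((n:ℝ) ^ ((r:ℝ)⁻¹))
    calc (n:ℝ) = ((n:ℝ) ^ ((r:ℝ)⁻¹)) ^ r := hroot.symm
    _ < ((A:ℝ) + 1) ^ r :=
        pow_lt_pow_left₀ this (Real.rpow_nonneg hn0 _) (by omega)
  -- h = n - A^r
  set h : ℕ := n - A ^ r with hhdef
  have hcast : (h:ℝ) = (n:ℝ) - (A:ℝ) ^ r := by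
    have : (h:ℕ) = n - A ^ r := rfl
    push_cast [hhdef, Nat.cast_sub hArnN]
    ring
  have hh0 : (0:ℝ) ≤ (h:ℝ) := h.cast_nonneg
  -- bound h ≤ 2 * 5^r * n^((r-1)/r)
  have hL1 : ((A:ℝ) + 1) ^ r ≤ (A:ℝ) ^ r + 5 ^ r * ((A:ℝ) ^ (r-1) + 1) :=
    succ_pow_le r hr (A:ℝ) A.cast_nonneg
  have hApred : (A:ℝ) ^ (r - 1) ≤ (n:ℝ) ^ (((r:ℝ) - 1) / r) := by
    calc (A:ℝ) ^ (r-1) ≤ ((n:ℝ) ^ ((r:ℝ)⁻¹)) ^ (r-1) :=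
        pow_le_pow_left₀ A.cast_nonneg hAle _
    _ = (n:ℝ) ^ (((r:ℝ) - 1) / r) := rpow_inv_pow_pred _ hn0 r hr
  have hnβ1 : (1:ℝ) ≤ (n:ℝ) ^ (((r:ℝ) - 1) / r) := by
    have : (0:ℝ) ≤ ((r:ℝ) - 1) / r := by
      apply div_nonneg
      · simp only [sub_nonneg]; exact_mod_cast hr
      · positivity
    calc (1:ℝ) = 1 ^ (((r:ℝ) - 1) / r) := (Real.one_rpow _).symm
    _ ≤ (n:ℝ) ^ (((r:ℝ) - 1) / r) := Real.rpow_le_rpow (by norm_num) hn1 this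
  have hhK : (h:ℝ) ≤ 2 * 5 ^ r * (n:ℝ) ^ (((r:ℝ) - 1) / r) := by
    have h5 : (0:ℝ) < 5 ^ r := by positivity
    nlinarith [hcast, hltA, hL1, hApred, hnβ1]
  -- B = ⌈ h^(1/s) ⌉
  set B : ℕ := ⌈(h:ℝ) ^ ((s:ℝ)⁻¹)⌉₊ with hB
  have hroots : ((h:ℝ) ^ ((s:ℝ)⁻¹)) ^ s = h := rpow_inv_pow _ hh0 s hs
  have hBge : (h:ℝ) ^ ((s:ℝ)⁻¹) ≤ (B:ℝ) := Nat.le_ceil _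
  have hhB : (h:ℝ) ≤ (B:ℝ) ^ s := by
    calc (h:ℝ) = ((h:ℝ) ^ ((s:ℝ)⁻¹)) ^ s := hroots.symm
    _ ≤ (B:ℝ) ^ s := pow_le_pow_left₀ (Real.rpow_nonneg hh0 _) hBge s
  have hhBN : h ≤ B ^ s := by exact_mod_cast hhB
  refine ⟨A ^ r + B ^ s, A, B, rfl, ?_, ?_⟩
  · have : n = A ^ r + h := by omega
    have : n ≤ A ^ r + B ^ s := by omega
    exact_mod_cast this
  · -- upper bound
    have hBlt : (B:ℝ) ≤ (h:ℝ) ^ ((s:ℝ)⁻¹) + 1 :=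
      (Nat.ceil_lt_add_one (Real.rpow_nonneg hh0 _)).le
    set x : ℝ := (h:ℝ) ^ ((s:ℝ)⁻¹) with hx
    have hx0 : 0 ≤ x := Real.rpow_nonneg hh0 _
    have hBs : (B:ℝ) ^ s ≤ (x + 1) ^ s := pow_le_pow_left₀ B.cast_nonneg hBlt s
    have hL2 : (x + 1) ^ s ≤ x ^ s + 5 ^ s * (x ^ (s-1) + 1) := succ_pow_le s hs x hx0
    have hxs : x ^ s = h := hroots
    have hxpred : x ^ (s - 1) = (h:ℝ) ^ (((s:ℝ) - 1) / s) := rpow_inv_pow_pred _ hh0 s hs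
    -- h^((s-1)/s) ≤ (2*5^r) * n^α
    have hγ0 : (0:ℝ) ≤ ((s:ℝ) - 1) / s := by
      apply div_nonneg
      · simp only [sub_nonneg]; exact_mod_cast hs
      · positivity
    have hγ1 : ((s:ℝ) - 1) / s ≤ 1 := by
      rw [div_le_one (by positivity)]; linarith
    have hK1 : (1:ℝ) ≤ 2 * 5 ^ r := by
      have : (1:ℝ) ≤ 5 ^ r := one_le_pow₀ (by norm_num)
      linarith
    have hmain : (h:ℝ) ^ (((s:ℝ) - 1) / s) ≤ (2 * 5 ^ r) * (n:ℝ) ^ α := by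
      calc (h:ℝ) ^ (((s:ℝ) - 1) / s)
          ≤ (2 * 5 ^ r * (n:ℝ) ^ (((r:ℝ) - 1) / r)) ^ (((s:ℝ) - 1) / s) :=
            Real.rpow_le_rpow hh0 hhK hγ0
      _ = (2 * 5 ^ r) ^ (((s:ℝ) - 1) / s) *
            ((n:ℝ) ^ (((r:ℝ) - 1) / r)) ^ (((s:ℝ) - 1) / s) := by
            rw [Real.mul_rpow (by positivity) (Real.rpow_nonneg hn0 _)]
      _ ≤ (2 * 5 ^ r) * (n:ℝ) ^ α := by
            apply mul_le_mul
            · calc (2 * 5 ^ r : ℝ) ^ (((s:ℝ) - 1) / s)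
                  ≤ (2 * 5 ^ r : ℝ) ^ (1:ℝ) :=
                    Real.rpow_le_rpow_of_exponent_le hK1 hγ1
              _ = 2 * 5 ^ r := Real.rpow_one _
            · rw [← Real.rpow_mul hn0]
              apply le_of_eq
              congr 1
              rw [hα]
              field_simp
              try ring
            · exact Real.rpow_nonneg (Real.rpow_nonneg hn0 _) _
            · positivity
    have hnα1 : (1:ℝ) ≤ (n:ℝ) ^ α := by
      calc (1:ℝ) = 1 ^ α := (Real.one_rpow _).symm
      _ ≤ (n:ℝ) ^ α := Real.rpow_le_rpow (by norm_num) hn1 hα0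
    have h5s : (0:ℝ) < 5 ^ s := by positivity
    have : ((A ^ r + B ^ s : ℕ) : ℝ) = (A:ℝ) ^ r + (B:ℝ) ^ s := by push_cast; ring
    rw [this]
    have hfin : (B:ℝ) ^ s ≤ (h:ℝ) + 5 ^ s * ((h:ℝ) ^ (((s:ℝ) - 1) / s) + 1) := by
      calc (B:ℝ) ^ s ≤ (x + 1) ^ s := hBs
      _ ≤ x ^ s + 5 ^ s * (x ^ (s-1) + 1) := hL2
      _ = (h:ℝ) + 5 ^ s * ((h:ℝ) ^ (((s:ℝ) - 1) / s) + 1) := by rw [hxs, hxpred]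
    nlinarith [hcast, hmain, hnα1, h5s, hfin]
end

section
/- Let (a_n)_{n≥1} be a sequence of real numbers and let α, β, γ ≥ 0 and c > 0 be real constants such that: (i) a_n = O(n^α); (ii) Σ_{n≤x} a_n = O(x^β); (iii) Σ_{n≤x} a_n² = c·x + O(x^γ). Assume α + β < 1. Then for any real δ satisfying max{α+β, γ} < δ < 1, there exists x₀ such that for all x ≥ x₀ the sequence (a_n) has at least one sign change for n in the interval [x, x + x^δ]; that is, there exist natural numbers m, n ∈ [x, x + x^δ] with a_m > 0 and a_n < 0. Consequently, the number of sign changes of (a_n) for n ≤ x is ≫ x^{1-δ} for sufficiently large x. -/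
open Finset Filter


lemma crossing_exists (a : ℕ → ℝ) (p q : ℕ) (hpq : p < q) (h : a p * a q < 0) :
    ∃ n m : ℕ, p ≤ n ∧ n < m ∧ m ≤ q ∧ a n * a m < 0 ∧
      ∀ k, n < k → k < m → a k = 0 := by
  have hq0 : a q ≠ 0 := by
    intro h0; rw [h0, mul_zero] at h; exact lt_irrefl 0 h
  set F : Finset ℕ := (Finset.Ico p q).filter (fun k => a k * a q < 0) with hF
  have hFne : F.Nonempty := ⟨p, by simp [hF, Finset.mem_filter, Finset.mem_Ico, hpq, h]⟩
  set n := F.max' hFne with hn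
  have hnF : n ∈ F := F.max'_mem hFne
  have hnIco : n ∈ Finset.Ico p q := (Finset.mem_filter.1 hnF).1
  have hnq : a n * a q < 0 := (Finset.mem_filter.1 hnF).2
  have hpn : p ≤ n := (Finset.mem_Ico.1 hnIco).1
  have hnltq : n < q := (Finset.mem_Ico.1 hnIco).2
  set G : Finset ℕ := (Finset.Ioc n q).filter (fun j => a j ≠ 0) with hG
  have hGne : G.Nonempty := ⟨q, by simp [hG, Finset.mem_filter, Finset.mem_Ioc, hnltq, hq0]⟩
  set m := G.min' hGne with hm
  have hmG : m ∈ G := G.min'_mem hGne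
  have hmIoc : m ∈ Finset.Ioc n q := (Finset.mem_filter.1 hmG).1
  have hm0 : a m ≠ 0 := (Finset.mem_filter.1 hmG).2
  have hnm : n < m := (Finset.mem_Ioc.1 hmIoc).1
  have hmq : m ≤ q := (Finset.mem_Ioc.1 hmIoc).2
  refine ⟨n, m, hpn, hnm, hmq, ?_, ?_⟩
  · -- a n * a m < 0
    have hmqpos : 0 < a m * a q := by
      rcases lt_trichotomy (a m * a q) 0 with hlt | heq | hgt
      · -- then m < q and m ∈ F, contradicting maximality
        have hmne : m ≠ q := by
          intro he; rw [he] at hlt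
          exact absurd (mul_self_nonneg (a q)) (not_le.2 hlt)
        have hmltq : m < q := lt_of_le_of_ne hmq hmne
        have hmF : m ∈ F := by
          simp only [hF, Finset.mem_filter, Finset.mem_Ico]
          exact ⟨⟨le_trans hpn hnm.le, hmltq⟩, hlt⟩
        exact absurd (F.le_max' m hmF) (not_le.2 hnm)
      · exact absurd heq (mul_ne_zero hm0 hq0)
      · exact hgt
    nlinarith [hnq, hmqpos, sq_nonneg (a q)]
  · intro k hk1 hk2
    by_contra hk0
    have hkG : k ∈ G := by
      simp only [hG, Finset.mem_filter, Finset.mem_Ioc]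
      exact ⟨⟨hk1, le_trans hk2.le hmq⟩, hk0⟩
    exact absurd (G.min'_le k hkG) (not_le.2 hk2)


lemma samesign_bound (a : ℕ → ℝ) (s : Finset ℕ) (B : ℝ)
    (hbd : ∀ n ∈ s, |a n| ≤ B)
    (hsame : (∀ n ∈ s, 0 ≤ a n) ∨ (∀ n ∈ s, a n ≤ 0)) :
    ∑ n ∈ s, (a n) ^ 2 ≤ B * |∑ n ∈ s, a n| := by
  have key : ∑ n ∈ s, (a n) ^ 2 ≤ B * ∑ n ∈ s, |a n| := by
    rw [Finset.mul_sum]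
    apply Finset.sum_le_sum
    intro n hn
    have h : (a n)^2 = |a n| * |a n| := by rw [abs_mul_abs_self, sq]
    rw [h]
    exact mul_le_mul_of_nonneg_right (hbd n hn) (abs_nonneg _)
  have habs : ∑ n ∈ s, |a n| = |∑ n ∈ s, a n| := by
    rcases hsame with hpos | hneg
    · rw [abs_of_nonneg (Finset.sum_nonneg hpos)]
      exact Finset.sum_congr rfl fun n hn => abs_of_nonneg (hpos n hn)
    · rw [abs_of_nonpos (Finset.sum_nonpos hneg), ← Finset.sum_neg_distrib]
      exact Finset.sum_congr rfl fun n hn => abs_of_nonpos (hneg n hn)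
  rw [← habs]; exact key

lemma part1 (a : ℕ → ℝ) (α β γ c : ℝ)
    (hα : 0 ≤ α) (hβ : 0 ≤ β) (hγ : 0 ≤ γ) (hc : 0 < c)
    (h1 : ∃ C : ℝ, ∃ n₀ : ℕ, ∀ n : ℕ, n₀ ≤ n → |a n| ≤ C * (n : ℝ) ^ α)
    (h2 : ∃ C : ℝ, ∃ n₀ : ℕ, ∀ x : ℕ, n₀ ≤ x →
      |∑ n ∈ Finset.Icc 1 x, a n| ≤ C * (x : ℝ) ^ β)
    (h3 : ∃ C : ℝ, ∃ n₀ : ℕ, ∀ x : ℕ, n₀ ≤ x →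
      |∑ n ∈ Finset.Icc 1 x, (a n) ^ 2 - c * (x : ℝ)| ≤ C * (x : ℝ) ^ γ)
    (δ : ℝ) (hδ₁ : max (α + β) γ < δ) (hδ₂ : δ < 1) :
    ∃ x₀ : ℝ, 1 ≤ x₀ ∧ ∀ x : ℝ, x₀ ≤ x →
      ∃ m n : ℕ, x ≤ (m : ℝ) ∧ (m : ℝ) ≤ x + x ^ δ ∧
        x ≤ (n : ℝ) ∧ (n : ℝ) ≤ x + x ^ δ ∧ 0 < a m ∧ a n < 0 := by
  obtain ⟨C₁, n₁, hC1⟩ := h1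
  obtain ⟨C₂, n₂, hC2⟩ := h2
  obtain ⟨C₃, n₃, hC3⟩ := h3
  set D₁ := max C₁ 0 with hD1
  set D₂ := max C₂ 0 with hD2
  set D₃ := max C₃ 0 with hD3
  have hD1' : 0 ≤ D₁ := le_max_right _ _
  have hD2' : 0 ≤ D₂ := le_max_right _ _
  have hD3' : 0 ≤ D₃ := le_max_right _ _
  have hC1' : ∀ n : ℕ, n₁ ≤ n → |a n| ≤ D₁ * (n:ℝ)^α := fun n hn =>
    (hC1 n hn).trans (mul_le_mul_of_nonneg_right (le_max_left _ _)
      (Real.rpow_nonneg (Nat.cast_nonneg n) _))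
  have hC2' : ∀ x : ℕ, n₂ ≤ x → |∑ n ∈ Finset.Icc 1 x, a n| ≤ D₂ * (x:ℝ)^β := fun x hx =>
    (hC2 x hx).trans (mul_le_mul_of_nonneg_right (le_max_left _ _)
      (Real.rpow_nonneg (Nat.cast_nonneg x) _))
  have hC3' : ∀ x : ℕ, n₃ ≤ x → |∑ n ∈ Finset.Icc 1 x, (a n)^2 - c*(x:ℝ)| ≤ D₃ * (x:ℝ)^γ :=
    fun x hx => (hC3 x hx).trans (mul_le_mul_of_nonneg_right (le_max_left _ _)
      (Real.rpow_nonneg (Nat.cast_nonneg x) _))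
  have habδ : α + β < δ := (le_max_left _ _).trans_lt hδ₁
  have hγδ : γ < δ := (le_max_right _ _).trans_lt hδ₁
  have hδ0 : 0 < δ := lt_of_le_of_lt (by positivity : (0:ℝ) ≤ α + β) habδ
  set A := 2^(γ+1) * D₃ with hAdef
  set B := 2^(α+β+1) * D₁ * D₂ with hBdef
  have hA0 : 0 ≤ A := by positivity
  have hB0 : 0 ≤ B := by positivity
  -- eventually conditions
  have evA : ∀ᶠ x : ℝ in atTop, A * x^γ ≤ c/4 * x^δ := by
    have ht : Tendsto (fun x : ℝ => x^(γ - δ)) atTop (nhds 0) := by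
      have := tendsto_rpow_neg_atTop (show 0 < δ - γ by linarith)
      simpa [neg_sub] using this
    filter_upwards [ht.eventually_lt_const (show (0:ℝ) < c/(4*(A+1)) by positivity),
      eventually_ge_atTop (1:ℝ)] with x hlt hx1
    have hxpos : (0:ℝ) < x := by linarith
    have hsplit : x^γ = x^(γ-δ) * x^δ := by
      rw [← Real.rpow_add hxpos]; ring_nf
    have hxd0 : (0:ℝ) ≤ x^δ := Real.rpow_nonneg hxpos.le _
    have h1 : A * x^(γ-δ) ≤ A * (c/(4*(A+1))) :=
      mul_le_mul_of_nonneg_left hlt.le hA0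
    have h2 : A * (c/(4*(A+1))) ≤ c/4 := by
      rw [mul_div_assoc', div_le_div_iff₀ (by positivity) (by norm_num)]
      nlinarith
    calc A * x^γ = (A * x^(γ-δ)) * x^δ := by rw [hsplit]; ring
      _ ≤ (c/4) * x^δ := mul_le_mul_of_nonneg_right (h1.trans h2) hxd0
  have evB : ∀ᶠ x : ℝ in atTop, B * x^(α+β) ≤ c/4 * x^δ := by
    have ht : Tendsto (fun x : ℝ => x^((α+β) - δ)) atTop (nhds 0) := by
      have := tendsto_rpow_neg_atTop (show 0 < δ - (α+β) by linarith)
      simpa [neg_sub] using this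
    filter_upwards [ht.eventually_lt_const (show (0:ℝ) < c/(4*(B+1)) by positivity),
      eventually_ge_atTop (1:ℝ)] with x hlt hx1
    have hxpos : (0:ℝ) < x := by linarith
    have hsplit : x^(α+β) = x^((α+β)-δ) * x^δ := by
      rw [← Real.rpow_add hxpos]; ring_nf
    have hxd0 : (0:ℝ) ≤ x^δ := Real.rpow_nonneg hxpos.le _
    have h1 : B * x^((α+β)-δ) ≤ B * (c/(4*(B+1))) :=
      mul_le_mul_of_nonneg_left hlt.le hB0
    have h2 : B * (c/(4*(B+1))) ≤ c/4 := by
      rw [mul_div_assoc', div_le_div_iff₀ (by positivity) (by norm_num)]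
      nlinarith
    calc B * x^(α+β) = (B * x^((α+β)-δ)) * x^δ := by rw [hsplit]; ring
      _ ≤ (c/4) * x^δ := mul_le_mul_of_nonneg_right (h1.trans h2) hxd0
  have ev8 : ∀ᶠ x : ℝ in atTop, (8:ℝ) ≤ x^δ :=
    (tendsto_rpow_atTop hδ0).eventually_ge_atTop 8
  have evall : ∀ᶠ x : ℝ in atTop, (1:ℝ) ≤ x ∧ (n₁:ℝ) ≤ x ∧ (n₂:ℝ) ≤ x ∧ (n₃:ℝ) ≤ x ∧
      (8:ℝ) ≤ x^δ ∧ A * x^γ ≤ c/4 * x^δ ∧ B * x^(α+β) ≤ c/4 * x^δ := by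
    filter_upwards [eventually_ge_atTop (1:ℝ), eventually_ge_atTop ((n₁:ℝ)),
      eventually_ge_atTop ((n₂:ℝ)), eventually_ge_atTop ((n₃:ℝ)), ev8, evA, evB] with
      x a1 a2 a3 a4 a5 a6 a7
    exact ⟨a1, a2, a3, a4, a5, a6, a7⟩
  obtain ⟨x₀', hx₀'⟩ := eventually_atTop.1 evall
  refine ⟨max x₀' 1, le_max_right _ _, ?_⟩
  intro x hx
  obtain ⟨hx1, hn1, hn2, hn3, hx8, hAx, hBx⟩ := hx₀' x ((le_max_left _ _).trans hx)
  have hxpos : (0:ℝ) < x := by linarith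
  have hxd0 : (0:ℝ) ≤ x^δ := Real.rpow_nonneg hxpos.le _
  have hxdx : x^δ ≤ x := by
    have := Real.rpow_le_rpow_of_exponent_le hx1 hδ₂.le
    rwa [Real.rpow_one] at this
  set N := ⌈x⌉₊ with hNdef
  set M := ⌊x + x^δ⌋₊ with hMdef
  have hNx : x ≤ (N:ℝ) := Nat.le_ceil x
  have hNx1 : (N:ℝ) < x + 1 := Nat.ceil_lt_add_one (by linarith)
  have hMle : (M:ℝ) ≤ x + x^δ := Nat.floor_le (by linarith)
  have hMgt : x + x^δ - 1 < (M:ℝ) := Nat.sub_one_lt_floor _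
  have hNMr : (N:ℝ) < (M:ℝ) := by linarith
  have hNM : N ≤ M := by exact_mod_cast hNMr.le
  have hn1N : n₁ ≤ N := by exact_mod_cast hn1.trans hNx
  have hn2N : n₂ ≤ N := by exact_mod_cast hn2.trans hNx
  have hn3N : n₃ ≤ N := by exact_mod_cast hn3.trans hNx
  have hMx2 : (M:ℝ) ≤ 2*x := by linarith
  have hNx2 : (N:ℝ) ≤ 2*x := by linarith
  have hsplitS : ∀ f : ℕ → ℝ, ∑ n ∈ Finset.Ioc N M, f n =
      ∑ n ∈ Finset.Icc 1 M, f n - ∑ n ∈ Finset.Icc 1 N, f n := by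
    intro f
    have h := Finset.sum_Ioc_consecutive f (Nat.zero_le N) hNM
    rw [show Finset.Icc 1 M = Finset.Ioc 0 M from Finset.Icc_add_one_left_eq_Ioc 0 M,
      show Finset.Icc 1 N = Finset.Ioc 0 N from Finset.Icc_add_one_left_eq_Ioc 0 N]
    linarith
  -- lower bound for sum of squares
  have hb3M := abs_le.1 (hC3' M (hn3N.trans hNM))
  have hb3N := abs_le.1 (hC3' N hn3N)
  have hMγ : D₃ * (M:ℝ)^γ ≤ D₃ * (2*x)^γ :=
    mul_le_mul_of_nonneg_left (Real.rpow_le_rpow (Nat.cast_nonneg M) hMx2 hγ) hD3'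
  have hNγ : D₃ * (N:ℝ)^γ ≤ D₃ * (2*x)^γ :=
    mul_le_mul_of_nonneg_left (Real.rpow_le_rpow (Nat.cast_nonneg N) hNx2 hγ) hD3'
  have hcMN : c * (x^δ - 2) ≤ c * ((M:ℝ) - (N:ℝ)) :=
    mul_le_mul_of_nonneg_left (by linarith) hc.le
  have hTlow : c*(x^δ - 2) - 2*D₃*(2*x)^γ ≤ ∑ n ∈ Finset.Ioc N M, (a n)^2 := by
    rw [hsplitS (fun n => (a n)^2)]
    have : c * ((M:ℝ) - (N:ℝ)) - 2*D₃*(2*x)^γ ≤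
        ∑ n ∈ Finset.Icc 1 M, (a n)^2 - ∑ n ∈ Finset.Icc 1 N, (a n)^2 := by
      linarith [hb3M.1, hb3M.2, hb3N.1, hb3N.2]
    linarith
  -- no same sign on Ioc N M
  have hsign : ¬((∀ n ∈ Finset.Ioc N M, 0 ≤ a n) ∨ (∀ n ∈ Finset.Ioc N M, a n ≤ 0)) := by
    intro hsame
    have hbd : ∀ n ∈ Finset.Ioc N M, |a n| ≤ D₁ * (2*x)^α := by
      intro n hn
      obtain ⟨hn1', hn2'⟩ := Finset.mem_Ioc.1 hn
      have hnn1 : n₁ ≤ n := hn1N.trans hn1'.le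
      have hn2x : (n:ℝ) ≤ 2*x := le_trans (by exact_mod_cast hn2') hMx2
      calc |a n| ≤ D₁ * (n:ℝ)^α := hC1' n hnn1
        _ ≤ D₁ * (2*x)^α := mul_le_mul_of_nonneg_left
            (Real.rpow_le_rpow (Nat.cast_nonneg n) hn2x hα) hD1'
    have hT := samesign_bound a _ _ hbd hsame
    have hT1 : |∑ n ∈ Finset.Ioc N M, a n| ≤ 2*D₂*(2*x)^β := by
      rw [hsplitS a]
      have habs : |∑ n ∈ Finset.Icc 1 M, a n - ∑ n ∈ Finset.Icc 1 N, a n| ≤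
          |∑ n ∈ Finset.Icc 1 M, a n| + |∑ n ∈ Finset.Icc 1 N, a n| := by
        rw [sub_eq_add_neg]
        exact (abs_add_le _ _).trans (by rw [abs_neg])
      have hbM := hC2' M (hn2N.trans hNM)
      have hbN := hC2' N hn2N
      have hMβ : D₂ * (M:ℝ)^β ≤ D₂ * (2*x)^β :=
        mul_le_mul_of_nonneg_left (Real.rpow_le_rpow (Nat.cast_nonneg M) hMx2 hβ) hD2'
      have hNβ : D₂ * (N:ℝ)^β ≤ D₂ * (2*x)^β :=
        mul_le_mul_of_nonneg_left (Real.rpow_le_rpow (Nat.cast_nonneg N) hNx2 hβ) hD2'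
      linarith
    have hDα0 : 0 ≤ D₁ * (2*x)^α := by positivity
    have hTup : ∑ n ∈ Finset.Ioc N M, (a n)^2 ≤ D₁ * (2*x)^α * (2*D₂*(2*x)^β) :=
      hT.trans (mul_le_mul_of_nonneg_left hT1 hDα0)
    have hprod : (2*x)^α * (2*x)^β = (2*x)^(α+β) := (Real.rpow_add (by linarith) α β).symm
    have h2γ : (2*x)^γ = 2^γ * x^γ := Real.mul_rpow (by norm_num) hxpos.le
    have h2ab : (2*x)^(α+β) = 2^(α+β) * x^(α+β) := Real.mul_rpow (by norm_num) hxpos.le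
    have hpow2γ : (2:ℝ)^(γ+1) = 2^γ * 2 := by
      rw [Real.rpow_add (by norm_num), Real.rpow_one]
    have hpow2ab : (2:ℝ)^(α+β+1) = 2^(α+β) * 2 := by
      rw [Real.rpow_add (by norm_num), Real.rpow_one]
    -- rewrite upper bound as B * x^(α+β)
    have hTup' : ∑ n ∈ Finset.Ioc N M, (a n)^2 ≤ B * x^(α+β) := by
      calc ∑ n ∈ Finset.Ioc N M, (a n)^2 ≤ D₁ * (2*x)^α * (2*D₂*(2*x)^β) := hTup
        _ = 2*D₁*D₂ * ((2*x)^α * (2*x)^β) := by ring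
        _ = 2*D₁*D₂ * (2^(α+β) * x^(α+β)) := by rw [hprod, h2ab]
        _ = B * x^(α+β) := by rw [hBdef, hpow2ab]; ring
    have hTlow' : c*x^δ - 2*c - A*x^γ ≤ ∑ n ∈ Finset.Ioc N M, (a n)^2 := by
      have : 2*D₃*(2*x)^γ = A * x^γ := by rw [h2γ, hAdef, hpow2γ]; ring
      linarith [hTlow, this.symm.le, this.le]
    -- numeric contradiction
    have h2c : 2*c ≤ c/4 * x^δ := by
      have h8 := mul_le_mul_of_nonneg_left hx8 (show (0:ℝ) ≤ c/4 by positivity)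
      linarith
    linarith [hTlow', hTup', hAx, hBx, h2c]
  push_neg at hsign
  obtain ⟨⟨n', hn'mem, hn'neg⟩, ⟨m', hm'mem, hm'pos⟩⟩ := hsign
  obtain ⟨hn'1, hn'2⟩ := Finset.mem_Ioc.1 hn'mem
  obtain ⟨hm'1, hm'2⟩ := Finset.mem_Ioc.1 hm'mem
  refine ⟨m', n', ?_, ?_, ?_, ?_, hm'pos, hn'neg⟩
  · exact hNx.trans (by exact_mod_cast hm'1.le)
  · exact le_trans (by exact_mod_cast hm'2) hMle
  · exact hNx.trans (by exact_mod_cast hn'1.le)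
  · exact le_trans (by exact_mod_cast hn'2) hMle

lemma part2 (a : ℕ → ℝ) (δ x₀ : ℝ) (hδ0 : 0 < δ) (hδ₂ : δ < 1) (hx₀ : 1 ≤ x₀)
    (H : ∀ x : ℝ, x₀ ≤ x →
      ∃ m n : ℕ, x ≤ (m : ℝ) ∧ (m : ℝ) ≤ x + x ^ δ ∧
        x ≤ (n : ℝ) ∧ (n : ℝ) ≤ x + x ^ δ ∧ 0 < a m ∧ a n < 0) :
    ∃ c' : ℝ, 0 < c' ∧ ∃ x₁ : ℕ, ∀ x : ℕ, x₁ ≤ x →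
      c' * (x : ℝ) ^ (1 - δ) ≤
        ({n : ℕ | 1 ≤ n ∧ n ≤ x ∧ ∃ m : ℕ, n < m ∧ a n * a m < 0 ∧
          ∀ k : ℕ, n < k → k < m → a k = 0}.ncard : ℝ) := by
  have h1δ : 0 < 1 - δ := by linarith
  have hev : ∀ᶠ X : ℝ in atTop, 2*x₀ ≤ X ∧ (2:ℝ) ≤ X ∧ (2:ℝ) ≤ X^δ ∧ (8:ℝ) ≤ X^(1-δ) := by
    filter_upwards [eventually_ge_atTop (2*x₀), eventually_ge_atTop (2:ℝ),
      (tendsto_rpow_atTop hδ0).eventually_ge_atTop 2,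
      (tendsto_rpow_atTop h1δ).eventually_ge_atTop 8] with X a1 a2 a3 a4
    exact ⟨a1, a2, a3, a4⟩
  obtain ⟨R, hR⟩ := eventually_atTop.1 hev
  refine ⟨1/8, by norm_num, ⌈R⌉₊, ?_⟩
  intro x hx
  set X : ℝ := (x:ℝ) with hXdef
  have hRX : R ≤ X := by
    rw [hXdef]
    exact le_trans (Nat.le_ceil R) (by exact_mod_cast hx)
  obtain ⟨hX0, hX2, hXδ, hX1δ⟩ := hR X hRX
  have hXpos : (0:ℝ) < X := by linarith
  have hXδ0 : (0:ℝ) ≤ X^δ := Real.rpow_nonneg hXpos.le _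
  set S : Set ℕ := {n : ℕ | 1 ≤ n ∧ n ≤ x ∧ ∃ m : ℕ, n < m ∧ a n * a m < 0 ∧
          ∀ k : ℕ, n < k → k < m → a k = 0} with hSdef
  set K : ℕ := ⌊(X/2)/(X^δ+2)⌋₊ with hKdef
  have hd2pos : (0:ℝ) < X^δ + 2 := by linarith
  have hKb : (K:ℝ)*(X^δ+2) ≤ X/2 := by
    have h := Nat.floor_le (show (0:ℝ) ≤ (X/2)/(X^δ+2) by positivity)
    calc (K:ℝ)*(X^δ+2) ≤ ((X/2)/(X^δ+2))*(X^δ+2) :=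
          mul_le_mul_of_nonneg_right h hd2pos.le
      _ = X/2 := div_mul_cancel₀ _ hd2pos.ne'
  have hP : ∀ j : ℕ, j < K → ∃ n : ℕ,
      (X/2 + j*(X^δ+2) ≤ (n:ℝ) ∧ (n:ℝ) ≤ X/2 + j*(X^δ+2) + X^δ) ∧ n ∈ S := by
    intro j hj
    set t : ℝ := X/2 + j*(X^δ+2) with htdef
    have hj0 : (0:ℝ) ≤ j*(X^δ+2) := by positivity
    have ht1 : (1:ℝ) ≤ t := by simp only [htdef]; linarith
    have htx₀ : x₀ ≤ t := by simp only [htdef]; linarith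
    have hjK : ((j:ℝ)+1) ≤ K := by exact_mod_cast hj
    have hjb : ((j:ℝ)+1)*(X^δ+2) ≤ (K:ℝ)*(X^δ+2) :=
      mul_le_mul_of_nonneg_right hjK hd2pos.le
    have htX : t + X^δ ≤ X := by
      simp only [htdef]
      nlinarith
    have htδ : t^δ ≤ X^δ :=
      Real.rpow_le_rpow (by linarith) (by linarith) hδ0.le
    obtain ⟨m, n, hm1, hm2, hn1, hn2, hma, hna⟩ := H t htx₀
    have hm2' : (m:ℝ) ≤ t + X^δ := by linarith
    have hn2' : (n:ℝ) ≤ t + X^δ := by linarith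
    have key : ∃ n' m' : ℕ, t ≤ (n':ℝ) ∧ (n':ℝ) ≤ t + X^δ ∧ n' < m' ∧
        a n' * a m' < 0 ∧ ∀ k, n' < k → k < m' → a k = 0 := by
      rcases lt_trichotomy m n with hlt | heq | hgt
      · obtain ⟨n', m', hp1, hp2, hp3, hp4, hp5⟩ :=
          crossing_exists a m n hlt (mul_neg_of_pos_of_neg hma hna)
        refine ⟨n', m', ?_, ?_, hp2, hp4, hp5⟩
        · exact hm1.trans (by exact_mod_cast hp1)
        · exact le_trans (by exact_mod_cast (hp2.le.trans hp3)) hn2'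
      · exfalso; rw [heq] at hma; linarith
      · obtain ⟨n', m', hp1, hp2, hp3, hp4, hp5⟩ :=
          crossing_exists a n m hgt (mul_neg_of_neg_of_pos hna hma)
        refine ⟨n', m', ?_, ?_, hp2, hp4, hp5⟩
        · exact hn1.trans (by exact_mod_cast hp1)
        · exact le_trans (by exact_mod_cast (hp2.le.trans hp3)) hm2'
    obtain ⟨n', m', hq1, hq2, hq3, hq4, hq5⟩ := key
    refine ⟨n', ⟨hq1, hq2⟩, ?_, ?_, m', hq3, hq4, hq5⟩
    · have : (1:ℝ) ≤ (n':ℝ) := ht1.trans hq1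
      exact_mod_cast this
    · have hnX : (n':ℝ) ≤ X := by linarith
      rw [hXdef] at hnX
      exact_mod_cast hnX
  classical
  set f : ℕ → ℕ := fun j => if h : j < K then (hP j h).choose else 0 with hfdef
  have hf : ∀ j : ℕ, (h : j < K) →
      (X/2 + j*(X^δ+2) ≤ (f j:ℝ) ∧ (f j:ℝ) ≤ X/2 + j*(X^δ+2) + X^δ) ∧ f j ∈ S := by
    intro j h
    simp only [hfdef, dif_pos h]
    exact (hP j h).choose_spec
  have hmono : ∀ i j : ℕ, i < j → j < K → f i < f j := by
    intro i j hij hjK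
    have hiK : i < K := hij.trans hjK
    obtain ⟨⟨_, hi2⟩, _⟩ := hf i hiK
    obtain ⟨⟨hj1, _⟩, _⟩ := hf j hjK
    have hij' : (i:ℝ) + 1 ≤ (j:ℝ) := by exact_mod_cast hij
    have hmul : ((i:ℝ)+1)*(X^δ+2) ≤ (j:ℝ)*(X^δ+2) :=
      mul_le_mul_of_nonneg_right hij' hd2pos.le
    have : (f i : ℝ) < (f j : ℝ) := by nlinarith
    exact_mod_cast this
  have hinj : Set.InjOn f (Finset.range K : Set ℕ) := by
    intro i hi j hj hij
    simp only [Finset.coe_range, Set.mem_Iio] at hi hj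
    rcases lt_trichotomy i j with h | h | h
    · exact absurd hij (hmono i j h hj).ne
    · exact h
    · exact absurd hij.symm (hmono j i h hi).ne
  have hcard : ((Finset.range K).image f).card = K := by
    rw [Finset.card_image_of_injOn hinj, Finset.card_range]
  have hsub : (((Finset.range K).image f : Finset ℕ) : Set ℕ) ⊆ S := by
    intro y hy
    simp only [Finset.coe_image, Set.mem_image, Finset.coe_range, Set.mem_Iio] at hy
    obtain ⟨j, hj, rfl⟩ := hy
    exact (hf j hj).2
  have hSfin : S.Finite := by
    apply Set.Finite.subset (Set.finite_Icc 1 x)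
    intro y hy
    exact Set.mem_Icc.2 ⟨hy.1, hy.2.1⟩
  have hKcard : K ≤ S.ncard := by
    calc K = (((Finset.range K).image f : Finset ℕ) : Set ℕ).ncard := by
          rw [Set.ncard_coe_finset, hcard]
      _ ≤ S.ncard := Set.ncard_le_ncard hsub hSfin
  -- numeric lower bound for K
  have hKlow : X^(1-δ)/4 - 1 < (K:ℝ) := by
    have hfl : (X/2)/(X^δ+2) - 1 < (K:ℝ) := Nat.sub_one_lt_floor _
    have hXsplit : X^(1-δ) * X^δ = X := by
      rw [← Real.rpow_add hXpos]; norm_num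
    have hdiv : X^(1-δ)/4 ≤ (X/2)/(X^δ+2) := by
      rw [le_div_iff₀ hd2pos]
      nlinarith [Real.rpow_nonneg hXpos.le (1-δ)]
    linarith
  have hfinal : (1/8) * X^(1-δ) ≤ (K:ℝ) := by linarith
  calc (1/8) * X^(1-δ) ≤ (K:ℝ) := hfinal
    _ ≤ (S.ncard : ℝ) := by exact_mod_cast hKcard

/-- **Theorem (Meher–Murty sign change criterion).**
Let `(a_n)` be a real sequence with `a_n = O(n^α)`, `Σ_{n≤x} a_n = O(x^β)` and
`Σ_{n≤x} a_n² = c x + O(x^γ)` where `α, β, γ ≥ 0`, `c > 0` and `α + β < 1`.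
Then for any `δ` with `max{α+β, γ} < δ < 1`, for all sufficiently large `x`
the sequence has a sign change (both a positive and a negative term) among the
indices `n ∈ [x, x + x^δ]`; consequently the number of sign changes of `(a_n)`
for `n ≤ x` is `≫ x^{1-δ}`. -/
theorem meher_murty_sign_changes
    (a : ℕ → ℝ) (α β γ c : ℝ)
    (hα : 0 ≤ α) (hβ : 0 ≤ β) (hγ : 0 ≤ γ) (hc : 0 < c)
    (h1 : ∃ C : ℝ, ∃ n₀ : ℕ, ∀ n : ℕ, n₀ ≤ n → |a n| ≤ C * (n : ℝ) ^ α)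
    (h2 : ∃ C : ℝ, ∃ n₀ : ℕ, ∀ x : ℕ, n₀ ≤ x →
      |∑ n ∈ Finset.Icc 1 x, a n| ≤ C * (x : ℝ) ^ β)
    (h3 : ∃ C : ℝ, ∃ n₀ : ℕ, ∀ x : ℕ, n₀ ≤ x →
      |∑ n ∈ Finset.Icc 1 x, (a n) ^ 2 - c * (x : ℝ)| ≤ C * (x : ℝ) ^ γ)
    (hαβ : α + β < 1)
    (δ : ℝ) (hδ₁ : max (α + β) γ < δ) (hδ₂ : δ < 1) :
    (∃ x₀ : ℝ, ∀ x : ℝ, x₀ ≤ x →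
      ∃ m n : ℕ, x ≤ (m : ℝ) ∧ (m : ℝ) ≤ x + x ^ δ ∧
        x ≤ (n : ℝ) ∧ (n : ℝ) ≤ x + x ^ δ ∧ 0 < a m ∧ a n < 0) ∧
    (∃ c' : ℝ, 0 < c' ∧ ∃ x₁ : ℕ, ∀ x : ℕ, x₁ ≤ x →
      c' * (x : ℝ) ^ (1 - δ) ≤
        ({n : ℕ | 1 ≤ n ∧ n ≤ x ∧ ∃ m : ℕ, n < m ∧ a n * a m < 0 ∧
          ∀ k : ℕ, n < k → k < m → a k = 0}.ncard : ℝ)) := by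
  obtain ⟨x₀, hx₀1, hx₀⟩ := part1 a α β γ c hα hβ hγ hc h1 h2 h3 δ hδ₁ hδ₂
  have hδ0 : 0 < δ :=
    lt_of_le_of_lt (by positivity : (0:ℝ) ≤ α + β) ((le_max_left _ _).trans_lt hδ₁)
  exact ⟨⟨x₀, hx₀⟩, part2 a δ x₀ hδ0 hδ₂ hx₀1 hx₀⟩
end

section
/- Let r and s be natural numbers with r, s ≥ 2, set α = (r-1)(s-1)/(rs), and let C = 2^{rs}·rs. For a sufficiently large natural number n, put t = ⌊n^{1/s}⌋ and let x₁, x₂ be the positive real numbers defined by x₁^r + t^s = n and x₂^r + t^s = n + C·n^α. Then x₂ - x₁ > 1; consequently there is a natural number A with x₁ ≤ A ≤ x₂, and m := A^r + t^s satisfies n ≤ m ≤ n + C·n^α. -/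
open Real Finset

private lemma bc_pow_sub_pow_le {a b : ℝ} (hb : 0 ≤ b) (hba : b ≤ a) (p : ℕ) :
    a ^ p - b ^ p ≤ (p : ℝ) * a ^ (p - 1) * (a - b) := by
  have ha : 0 ≤ a := hb.trans hba
  rw [← geom_sum₂_mul]
  refine mul_le_mul_of_nonneg_right ?_ (by linarith)
  calc ∑ i ∈ Finset.range p, a ^ i * b ^ (p - 1 - i)
      ≤ ∑ _i ∈ Finset.range p, a ^ (p - 1) := by
        refine Finset.sum_le_sum fun i hi => ?_
        have hi' := Finset.mem_range.mp hi
        calc a ^ i * b ^ (p - 1 - i) ≤ a ^ i * a ^ (p - 1 - i) :=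
              mul_le_mul_of_nonneg_left (pow_le_pow_left₀ hb hba _) (pow_nonneg ha _)
          _ = a ^ (p - 1) := by rw [← pow_add]; congr 1; omega
    _ = (p : ℝ) * a ^ (p - 1) := by
        rw [Finset.sum_const, Finset.card_range, nsmul_eq_mul]

set_option maxHeartbeats 1000000

/-- **Theorem (key step of the Bambah–Chowla argument).**
Let `r, s ≥ 2`, `α = (r-1)(s-1)/(rs)` and `C = 2^{rs}·rs`. For sufficiently
large `n`, putting `t = ⌊n^{1/s}⌋`, `x₁ = (n - t^s)^{1/r}` and
`x₂ = (n + C·n^α - t^s)^{1/r}`, one has `x₂ - x₁ > 1`; consequently there is a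
natural number `A` with `x₁ ≤ A ≤ x₂`, and `m := A^r + t^s` satisfies
`n ≤ m ≤ n + C·n^α`. -/
theorem bambah_chowla_key_step
    (r s : ℕ) (hr : 2 ≤ r) (hs : 2 ≤ s) (α C : ℝ)
    (hα : α = (((r : ℝ) - 1) * ((s : ℝ) - 1)) / ((r : ℝ) * (s : ℝ)))
    (hC : C = 2 ^ (r * s) * ((r : ℝ) * (s : ℝ))) :
    ∃ n₀ : ℕ, ∀ n : ℕ, n₀ ≤ n → ∀ t : ℕ, ∀ x₁ x₂ : ℝ,
      t = ⌊(n : ℝ) ^ ((1 : ℝ) / (s : ℝ))⌋₊ →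
      x₁ = ((n : ℝ) - (t : ℝ) ^ s) ^ ((1 : ℝ) / (r : ℝ)) →
      x₂ = ((n : ℝ) + C * (n : ℝ) ^ α - (t : ℝ) ^ s) ^ ((1 : ℝ) / (r : ℝ)) →
      1 < x₂ - x₁ ∧
        ∃ A : ℕ, x₁ ≤ (A : ℝ) ∧ (A : ℝ) ≤ x₂ ∧
          (n : ℝ) ≤ ((A ^ r + t ^ s : ℕ) : ℝ) ∧
          ((A ^ r + t ^ s : ℕ) : ℝ) ≤ (n : ℝ) + C * (n : ℝ) ^ α := by
  obtain ⟨N, hN⟩ := exists_nat_ge C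
  refine ⟨(N + 1) ^ (r * s), fun n hn t x₁ x₂ ht hx₁ hx₂ => ?_⟩
  have hr2 : (2:ℝ) ≤ (r:ℝ) := by exact_mod_cast hr
  have hs2 : (2:ℝ) ≤ (s:ℝ) := by exact_mod_cast hs
  have hr0 : (0:ℝ) < (r:ℝ) := by linarith
  have hs0 : (0:ℝ) < (s:ℝ) := by linarith
  have hn1 : 1 ≤ n := le_trans (Nat.one_le_pow _ _ (Nat.succ_pos N)) hn
  have hn1R : (1:ℝ) ≤ (n:ℝ) := by exact_mod_cast hn1
  have hn0 : (0:ℝ) < (n:ℝ) := by linarith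
  set β : ℝ := ((s:ℝ) - 1) / (s:ℝ) with hβdef
  set e1 : ℝ := ((s:ℝ) - 1) / ((r:ℝ) * (s:ℝ)) with he1def
  have hβα : e1 + α = β := by
    rw [hα, hβdef, he1def]; field_simp; ring
  have hαβ : β * (((r:ℝ) - 1) / (r:ℝ)) = α := by
    rw [hα, hβdef]; field_simp
  -- u and t
  set u : ℝ := (n:ℝ) ^ ((1:ℝ) / (s:ℝ)) with hudef
  have hu0 : 0 ≤ u := Real.rpow_nonneg hn0.le _
  have hus : u ^ s = (n:ℝ) := by
    rw [hudef, one_div]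
    exact Real.rpow_inv_natCast_pow hn0.le (by omega)
  have ht_le : (t:ℝ) ≤ u := by rw [ht]; exact Nat.floor_le hu0
  have ht_lt : u < (t:ℝ) + 1 := by rw [ht]; exact Nat.lt_floor_add_one u
  have ht0 : (0:ℝ) ≤ (t:ℝ) := Nat.cast_nonneg t
  have hts : (t:ℝ) ^ s ≤ (n:ℝ) := by
    rw [← hus]; exact pow_le_pow_left₀ ht0 ht_le s
  have hsub0 : 0 ≤ (n:ℝ) - (t:ℝ) ^ s := by linarith
  have hβu : u ^ (s - 1) = (n:ℝ) ^ β := by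
    have h1 : u ^ (s - 1) = (n:ℝ) ^ ((1:ℝ) / (s:ℝ) * ((s - 1 : ℕ) : ℝ)) := by
      rw [Real.rpow_mul hn0.le, Real.rpow_natCast]
    rw [h1]; congr 1
    rw [Nat.cast_sub (by omega), Nat.cast_one, hβdef]
    field_simp
  have hnβ0 : (0:ℝ) ≤ (n:ℝ) ^ β := Real.rpow_nonneg hn0.le _
  have hnts : (n:ℝ) - (t:ℝ) ^ s ≤ (s:ℝ) * (n:ℝ) ^ β := by
    have h := bc_pow_sub_pow_le ht0 ht_le s
    rw [hus, hβu] at h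
    have h2 : (s:ℝ) * (n:ℝ) ^ β * (u - (t:ℝ)) ≤ (s:ℝ) * (n:ℝ) ^ β * 1 :=
      mul_le_mul_of_nonneg_left (by linarith) (by positivity)
    linarith
  -- C and the bound C * n^α ≤ n^β
  have hC0 : (0:ℝ) ≤ C := by rw [hC]; positivity
  have hnα0 : (0:ℝ) < (n:ℝ) ^ α := Real.rpow_pos_of_pos hn0 α
  have hCnα : C * (n:ℝ) ^ α ≤ (n:ℝ) ^ β := by
    have hcast : (((N + 1) ^ (r * s) : ℕ) : ℝ) ≤ (n:ℝ) := by exact_mod_cast hn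
    have hcast' : ((N:ℝ) + 1) ^ (r * s : ℕ) ≤ (n:ℝ) := by push_cast at hcast ⊢; exact hcast
    have hroot : ((N:ℝ) + 1) ≤ (n:ℝ) ^ ((1:ℝ) / ((r:ℝ) * (s:ℝ))) := by
      have h3 := Real.rpow_le_rpow (by positivity) hcast'
        (by positivity : (0:ℝ) ≤ (1:ℝ) / ((r:ℝ) * (s:ℝ)))
      have h4 : (((N:ℝ) + 1) ^ (r * s : ℕ)) ^ ((1:ℝ) / ((r:ℝ) * (s:ℝ))) = (N:ℝ) + 1 := by
        rw [← Real.rpow_natCast_mul (by positivity)]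
        have : ((r * s : ℕ) : ℝ) * ((1:ℝ) / ((r:ℝ) * (s:ℝ))) = 1 := by
          push_cast; field_simp
        rw [this, Real.rpow_one]
      rwa [h4] at h3
    have hCe1 : C ≤ (n:ℝ) ^ e1 := by
      have h5 : (n:ℝ) ^ ((1:ℝ) / ((r:ℝ) * (s:ℝ))) ≤ (n:ℝ) ^ e1 := by
        apply Real.rpow_le_rpow_of_exponent_le hn1R
        rw [he1def]
        apply (div_le_div_iff_of_pos_right (by positivity)).mpr
        linarith
      calc C ≤ (N:ℝ) := hN
        _ ≤ (N:ℝ) + 1 := by linarith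
        _ ≤ (n:ℝ) ^ ((1:ℝ) / ((r:ℝ) * (s:ℝ))) := hroot
        _ ≤ (n:ℝ) ^ e1 := h5
    calc C * (n:ℝ) ^ α ≤ (n:ℝ) ^ e1 * (n:ℝ) ^ α :=
          mul_le_mul_of_nonneg_right hCe1 hnα0.le
      _ = (n:ℝ) ^ (e1 + α) := (Real.rpow_add hn0 _ _).symm
      _ = (n:ℝ) ^ β := by rw [hβα]
  -- D = x₂^r
  set D : ℝ := (n:ℝ) + C * (n:ℝ) ^ α - (t:ℝ) ^ s with hDdef
  have hD0 : 0 ≤ D := by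
    have := mul_nonneg hC0 hnα0.le
    rw [hDdef]; linarith
  have hD2 : D ≤ 2 * (s:ℝ) * (n:ℝ) ^ β := by
    rw [hDdef]
    nlinarith [hnts, hCnα, hnβ0, hs2]
  have hx10 : 0 ≤ x₁ := by rw [hx₁]; exact Real.rpow_nonneg hsub0 _
  have hx1r : x₁ ^ r = (n:ℝ) - (t:ℝ) ^ s := by
    rw [hx₁, one_div]; exact Real.rpow_inv_natCast_pow hsub0 (by omega)
  have hx2r : x₂ ^ r = D := by
    rw [hx₂, one_div]; exact Real.rpow_inv_natCast_pow hD0 (by omega)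
  have hx12 : x₁ ≤ x₂ := by
    rw [hx₁, hx₂]
    refine Real.rpow_le_rpow hsub0 ?_ (by positivity)
    rw [hDdef]
    linarith [mul_nonneg hC0 hnα0.le]
  have hx20 : 0 ≤ x₂ := hx10.trans hx12
  -- bound x₂^(r-1) ≤ 2 s n^α
  set γ : ℝ := ((r:ℝ) - 1) / (r:ℝ) with hγdef
  have hγ0 : 0 ≤ γ := by rw [hγdef]; apply div_nonneg <;> linarith
  have hγ1 : γ ≤ 1 := by
    rw [hγdef]; apply (div_le_one (by linarith)).mpr; linarith
  have hx2pow : x₂ ^ (r - 1) ≤ 2 * (s:ℝ) * (n:ℝ) ^ α := by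
    have h1 : x₂ ^ (r - 1) = D ^ γ := by
      rw [hx₂]
      rw [← Real.rpow_natCast (((n:ℝ) + C * (n:ℝ) ^ α - (t:ℝ) ^ s) ^ ((1:ℝ)/(r:ℝ))) (r - 1),
        ← Real.rpow_mul hD0]
      congr 1
      rw [Nat.cast_sub (by omega), Nat.cast_one, hγdef]
      field_simp
    have h2 : D ^ γ ≤ (2 * (s:ℝ) * (n:ℝ) ^ β) ^ γ := Real.rpow_le_rpow hD0 hD2 hγ0
    have h3 : (2 * (s:ℝ) * (n:ℝ) ^ β) ^ γ = (2 * (s:ℝ)) ^ γ * ((n:ℝ) ^ β) ^ γ :=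
      Real.mul_rpow (by positivity) hnβ0
    have h4 : ((n:ℝ) ^ β) ^ γ = (n:ℝ) ^ α := by
      rw [← Real.rpow_mul hn0.le, hγdef, hαβ]
    have h5 : (2 * (s:ℝ)) ^ γ ≤ 2 * (s:ℝ) := by
      calc (2 * (s:ℝ)) ^ γ ≤ (2 * (s:ℝ)) ^ (1:ℝ) :=
            Real.rpow_le_rpow_of_exponent_le (by linarith) hγ1
        _ = 2 * (s:ℝ) := Real.rpow_one _
    calc x₂ ^ (r - 1) = D ^ γ := h1
      _ ≤ (2 * (s:ℝ)) ^ γ * ((n:ℝ) ^ β) ^ γ := by rw [← h3]; exact h2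
      _ = (2 * (s:ℝ)) ^ γ * (n:ℝ) ^ α := by rw [h4]
      _ ≤ 2 * (s:ℝ) * (n:ℝ) ^ α := mul_le_mul_of_nonneg_right h5 hnα0.le
  -- main inequality
  have hmain := bc_pow_sub_pow_le hx10 hx12 r
  rw [hx2r, hx1r] at hmain
  have hdiff : D - ((n:ℝ) - (t:ℝ) ^ s) = C * (n:ℝ) ^ α := by rw [hDdef]; ring
  have hle : C * (n:ℝ) ^ α ≤ (r:ℝ) * (2 * (s:ℝ) * (n:ℝ) ^ α) * (x₂ - x₁) := by
    have h6 : (r:ℝ) * x₂ ^ (r - 1) * (x₂ - x₁) ≤ (r:ℝ) * (2 * (s:ℝ) * (n:ℝ) ^ α) * (x₂ - x₁) := by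
      apply mul_le_mul_of_nonneg_right _ (by linarith)
      exact mul_le_mul_of_nonneg_left hx2pow hr0.le
    linarith
  have hC4 : 4 * ((r:ℝ) * (s:ℝ)) ≤ C := by
    rw [hC]
    have h7 : (4:ℝ) ≤ 2 ^ (r * s) := by
      calc (4:ℝ) = 2 ^ 2 := by norm_num
        _ ≤ 2 ^ (r * s) := by
          apply pow_le_pow_right₀ one_le_two
          calc 2 ≤ r := hr
            _ ≤ r * s := Nat.le_mul_of_pos_right r (by omega)
    exact mul_le_mul_of_nonneg_right h7 (mul_pos hr0 hs0).le
  have hgt : 1 < x₂ - x₁ := by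
    have h8 : 4 * ((r:ℝ) * (s:ℝ)) * (n:ℝ) ^ α ≤ C * (n:ℝ) ^ α :=
      mul_le_mul_of_nonneg_right hC4 hnα0.le
    have hP : (0:ℝ) < 2 * ((r:ℝ) * (s:ℝ) * (n:ℝ) ^ α) := by positivity
    have h9 : 2 * ((r:ℝ) * (s:ℝ) * (n:ℝ) ^ α) * 2 ≤
        2 * ((r:ℝ) * (s:ℝ) * (n:ℝ) ^ α) * (x₂ - x₁) := by linarith [h8, hle]
    have h10 : (2:ℝ) ≤ x₂ - x₁ := le_of_mul_le_mul_left h9 hP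
    linarith
  refine ⟨hgt, ⌈x₁⌉₊, Nat.le_ceil x₁, ?_, ?_, ?_⟩
  · have := Nat.ceil_lt_add_one hx10
    linarith
  · push_cast
    have h9 : x₁ ^ r ≤ ((⌈x₁⌉₊ : ℝ)) ^ r := pow_le_pow_left₀ hx10 (Nat.le_ceil x₁) r
    linarith [hx1r ▸ h9]
  · push_cast
    have hA2 : ((⌈x₁⌉₊ : ℝ)) ≤ x₂ := by
      have := Nat.ceil_lt_add_one hx10
      linarith
    have h10 : ((⌈x₁⌉₊ : ℝ)) ^ r ≤ x₂ ^ r :=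
      pow_le_pow_left₀ (Nat.cast_nonneg _) hA2 r
    rw [hx2r, hDdef] at h10
    linarith
end
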